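/- arXiv:2505.12783 — 10 statements merged into one kernel-verified Lean document; each statement's English description precedes it below -/
import Mathlib

section
/- Let G be a group whose commutator subgroup G' is abelian (G is metabelian), and let a, c ∈ G with a^6 ∈ G' and c ∈ G'. If c^a ≠ c^3, then c ≠ c · c^a · (c^{a^3})^{-1} · (c^{a^4})^{-1}. -/
theorem stmt_3 {G : Type*} [Group G]
    (hmet : ∀ x ∈ commutator G, ∀ y ∈ commutator G, x * y = y * x)
    (a c : G) (ha : a ^ 6 ∈ commutator G) (hc : c ∈ commutator G)
    (hne : a⁻¹ * c * a ≠ c ^ 3) :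
    c ≠ c * (a⁻¹ * c * a) * ((a ^ 3)⁻¹ * c * a ^ 3)⁻¹ * ((a ^ 4)⁻¹ * c * a ^ 4)⁻¹ := by
  intro h
  set x : ℕ → G := fun i => (a ^ i)⁻¹ * c * a ^ i with hxdef
  have hx : ∀ i, x (i + 1) = a⁻¹ * x i * a := by
    intro i
    simp only [hxdef, pow_succ]
    group
  have hmem : ∀ i, x i ∈ commutator G := by
    intro i
    have := Subgroup.Normal.conj_mem (inferInstance : (commutator G).Normal) c hc (a ^ i)⁻¹
    simpa [hxdef] using this
  have comm : ∀ i j, x i * x j = x j * x i := fun i j => hmet _ (hmem i) _ (hmem j)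
  have h0 : x 0 = c := by simp [hxdef]
  have hx1 : x 1 = a⁻¹ * c * a := by simp [hxdef]
  have h6 : x 6 = x 0 := by
    have hca := hmet (a ^ 6) ha c hc
    show (a ^ 6)⁻¹ * c * a ^ 6 = (a ^ 0)⁻¹ * c * a ^ 0
    rw [mul_assoc, ← hca]
    group
  have h7 : x 7 = x 1 := by
    rw [show (7 : ℕ) = 6 + 1 from rfl, hx, h6, ← hx]
  have shift : ∀ i j k, x i = x j * x k → x (i + 1) = x (j + 1) * x (k + 1) := by
    intro i j k hijk
    rw [hx, hx, hx, hijk]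
    group
  have hh : c = c * x 1 * (x 3)⁻¹ * (x 4)⁻¹ := by
    rw [hx1]; exact h
  have hone : x 1 * (x 3)⁻¹ * (x 4)⁻¹ = 1 := by
    apply mul_left_cancel (a := c)
    rw [mul_one]
    calc c * (x 1 * (x 3)⁻¹ * (x 4)⁻¹) = c * x 1 * (x 3)⁻¹ * (x 4)⁻¹ := by group
      _ = c := hh.symm
  have e1 : x 1 = x 4 * x 3 := by
    calc x 1 = x 1 * (x 3)⁻¹ * (x 4)⁻¹ * (x 4 * x 3) := by group
      _ = 1 * (x 4 * x 3) := by rw [hone]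
      _ = x 4 * x 3 := one_mul _
  have e2 : x 2 = x 5 * x 4 := by
    have := shift 1 4 3 e1; norm_num at this; exact this
  have e3 : x 3 = x 0 * x 5 := by
    have := shift 2 5 4 e2; norm_num at this; rw [h6] at this; exact this
  have e4 : x 4 = x 1 * x 0 := by
    have := shift 3 0 5 e3; norm_num at this; rw [h6] at this; exact this
  have e5 : x 5 = x 2 * x 1 := by
    have := shift 4 1 0 e4; norm_num at this; exact this
  have e6 : x 0 = x 3 * x 2 := by
    have := shift 5 2 1 e5; norm_num at this; rw [h6] at this; exact this
  have hA' : x 0 * (x 0 * x 5) = 1 := by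
    apply mul_left_cancel (a := x 1)
    rw [mul_one]
    calc x 1 * (x 0 * (x 0 * x 5)) = x 1 * x 0 * (x 0 * x 5) := by group
      _ = x 4 * x 3 := by rw [← e4, ← e3]
      _ = x 1 := e1.symm
  have h05 : x 0 * x 5 = (x 0)⁻¹ := (inv_eq_of_mul_eq_one_right hA').symm
  have h5 : x 5 = (x 0)⁻¹ * (x 0)⁻¹ := by
    have : x 5 = (x 0)⁻¹ * (x 0 * x 5) := by group
    rw [this, h05]
  have h3 : x 3 = (x 0)⁻¹ := by
    rw [e3, h5]; group
  have E : x 0 = (x 0)⁻¹ * ((x 0)⁻¹ * (x 0)⁻¹ * (x 0 * x 1)) :=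
    calc x 0 = x 3 * x 2 := e6
      _ = (x 0)⁻¹ * (x 5 * x 4) := by rw [h3, e2]
      _ = (x 0)⁻¹ * ((x 0)⁻¹ * (x 0)⁻¹ * (x 1 * x 0)) := by rw [h5, e4]
      _ = (x 0)⁻¹ * ((x 0)⁻¹ * (x 0)⁻¹ * (x 0 * x 1)) := by rw [comm 1 0]
  have key : x 1 = x 0 ^ 3 := by
    calc x 1 = x 0 * x 0 * ((x 0)⁻¹ * ((x 0)⁻¹ * (x 0)⁻¹ * (x 0 * x 1))) := by group
      _ = x 0 * x 0 * x 0 := by rw [← E]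
      _ = x 0 ^ 3 := by rw [pow_succ, pow_succ, pow_one]
  exact hne (by rw [← hx1, key, h0])
end

section
/- Let G be a metabelian group with a, c ∈ G, a^6 ∈ G', c ∈ G'. If c = c · c^a · (c^{a^3})^{-1} · (c^{a^4})^{-1}, then c^{a^3} = c^{-1}. -/
theorem stmt_4 {G : Type*} [Group G]
    (hmet : ∀ x ∈ commutator G, ∀ y ∈ commutator G, x * y = y * x)
    (a c : G) (ha : a ^ 6 ∈ commutator G) (hc : c ∈ commutator G)
    (heq : c = c * (a⁻¹ * c * a) * ((a ^ 3)⁻¹ * c * a ^ 3)⁻¹ * ((a ^ 4)⁻¹ * c * a ^ 4)⁻¹) :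
    (a ^ 3)⁻¹ * c * a ^ 3 = c⁻¹ := by
  have hnorm : (commutator G).Normal := inferInstance
  have hca : a⁻¹ * c * a ∈ commutator G := by
    simpa using hnorm.conj_mem c hc a⁻¹
  have h6 : a ^ 6 * c = c * a ^ 6 := hmet _ ha _ hc
  have h7 : a ^ 6 * (a⁻¹ * c * a) = (a⁻¹ * c * a) * a ^ 6 := hmet _ ha _ hca
  -- step 1: c^a = c^{a^4} * c^{a^3}
  have h1 : (a⁻¹ * c * a) = ((a ^ 4)⁻¹ * c * a ^ 4) * ((a ^ 3)⁻¹ * c * a ^ 3) := by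
    calc (a⁻¹ * c * a)
        = c⁻¹ * (c * (a⁻¹ * c * a) * ((a ^ 3)⁻¹ * c * a ^ 3)⁻¹ * ((a ^ 4)⁻¹ * c * a ^ 4)⁻¹)
            * ((a ^ 4)⁻¹ * c * a ^ 4) * ((a ^ 3)⁻¹ * c * a ^ 3) := by group
      _ = c⁻¹ * c * ((a ^ 4)⁻¹ * c * a ^ 4) * ((a ^ 3)⁻¹ * c * a ^ 3) := by rw [← heq]
      _ = ((a ^ 4)⁻¹ * c * a ^ 4) * ((a ^ 3)⁻¹ * c * a ^ 3) := by group
  have hB : (a ^ 3)⁻¹ * ((a ^ 4)⁻¹ * c * a ^ 4) * a ^ 3 = a⁻¹ * c * a := by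
    have h : (a ^ 3)⁻¹ * ((a ^ 4)⁻¹ * c * a ^ 4) * a ^ 3
        = (a ^ 6)⁻¹ * ((a⁻¹ * c * a) * a ^ 6) := by group
    rw [h, ← h7]; group
  have hC : (a ^ 3)⁻¹ * ((a ^ 3)⁻¹ * c * a ^ 3) * a ^ 3 = c := by
    have h : (a ^ 3)⁻¹ * ((a ^ 3)⁻¹ * c * a ^ 3) * a ^ 3 = (a ^ 6)⁻¹ * (c * a ^ 6) := by group
    rw [h, ← h6]; group
  -- step 2: conjugate h1 by a^3 : c^{a^4} = c^a * c
  have h2 : (a ^ 4)⁻¹ * c * a ^ 4 = (a⁻¹ * c * a) * c := by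
    calc (a ^ 4)⁻¹ * c * a ^ 4
        = (a ^ 3)⁻¹ * (a⁻¹ * c * a) * a ^ 3 := by group
      _ = (a ^ 3)⁻¹ * ((a ^ 4)⁻¹ * c * a ^ 4 * ((a ^ 3)⁻¹ * c * a ^ 3)) * a ^ 3 := by rw [← h1]
      _ = ((a ^ 3)⁻¹ * ((a ^ 4)⁻¹ * c * a ^ 4) * a ^ 3)
          * ((a ^ 3)⁻¹ * ((a ^ 3)⁻¹ * c * a ^ 3) * a ^ 3) := by group
      _ = (a⁻¹ * c * a) * c := by rw [hB, hC]
  -- conclude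
  have h3 : (a⁻¹ * c * a) * (c * ((a ^ 3)⁻¹ * c * a ^ 3)) = (a⁻¹ * c * a) * 1 := by
    calc (a⁻¹ * c * a) * (c * ((a ^ 3)⁻¹ * c * a ^ 3))
        = ((a⁻¹ * c * a) * c) * ((a ^ 3)⁻¹ * c * a ^ 3) := by group
      _ = ((a ^ 4)⁻¹ * c * a ^ 4) * ((a ^ 3)⁻¹ * c * a ^ 3) := by rw [← h2]
      _ = a⁻¹ * c * a := h1.symm
      _ = (a⁻¹ * c * a) * 1 := by group
  exact eq_inv_of_mul_eq_one_right (mul_left_cancel h3)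
end

section
/- Let G be a metabelian group with a, c ∈ G, a^6 ∈ G', c ∈ G'. If c = c · c^a · (c^{a^3})^{-1} · (c^{a^4})^{-1}, then c^7 = 1. -/
theorem stmt_5 {G : Type*} [Group G]
    (hmet : ∀ x ∈ commutator G, ∀ y ∈ commutator G, x * y = y * x)
    (a c : G) (ha : a ^ 6 ∈ commutator G) (hc : c ∈ commutator G)
    (heq : c = c * (a⁻¹ * c * a) * ((a ^ 3)⁻¹ * c * a ^ 3)⁻¹ * ((a ^ 4)⁻¹ * c * a ^ 4)⁻¹) :
    c ^ 7 = 1 := by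
  set d : ℕ → G := fun k => (a ^ k)⁻¹ * c * a ^ k with hd
  have hmem : ∀ k, d k ∈ commutator G := by
    intro k
    have := (Subgroup.commutator_normal (⊤ : Subgroup G) ⊤).conj_mem c hc (a ^ k)⁻¹
    simpa [hd, commutator] using this
  have hcomm : ∀ j k, d j * d k = d k * d j := fun j k => hmet _ (hmem j) _ (hmem k)
  have hdadd : ∀ j k : ℕ, (a ^ j)⁻¹ * d k * a ^ j = d (k + j) := by
    intro j k
    simp only [hd, pow_add]
    group
  have hDmul : ∀ j k l : ℕ, (a ^ j)⁻¹ * (d k * d l) * a ^ j = d (k + j) * d (l + j) := by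
    intro j k l
    rw [show (a ^ j)⁻¹ * (d k * d l) * a ^ j
        = ((a ^ j)⁻¹ * d k * a ^ j) * ((a ^ j)⁻¹ * d l * a ^ j) by group, hdadd, hdadd]
  have hfix : ∀ x ∈ commutator G, (a ^ 6)⁻¹ * x * a ^ 6 = x := by
    intro x hx
    rw [mul_assoc, hmet _ hx _ ha]
    group
  have hper : ∀ k, d (k + 6) = d k := by
    intro k
    rw [← hdadd 6 k, hfix _ (hmem k)]
  have hd0 : d 0 = c := by simp [hd]
  -- From heq : d 1 = d 3 * d 4
  have h1 : d 1 = d 3 * d 4 := by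
    have h : c * (d 1 * (d 3)⁻¹ * (d 4)⁻¹) = c * 1 := by
      rw [mul_one]
      simp only [hd, pow_one]
      rw [← mul_assoc, ← mul_assoc]
      exact heq.symm
    have h' : d 1 * (d 3)⁻¹ * (d 4)⁻¹ = 1 := mul_left_cancel h
    have h'' : d 1 * ((d 3)⁻¹ * (d 4)⁻¹) = 1 := by rw [← h']; group
    have h3 := mul_eq_one_iff_eq_inv.mp h''
    rw [mul_inv_rev, inv_inv, inv_inv] at h3
    rw [h3, hcomm]
  -- conjugate by a^5 : d 0 = d 2 * d 3
  have hB : d 0 = d 2 * d 3 := by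
    have h := congrArg (fun x => (a ^ 5)⁻¹ * x * a ^ 5) h1
    rw [hdadd, hDmul] at h
    rw [show (1 + 5 : ℕ) = 0 + 6 from rfl, show (3 + 5 : ℕ) = 2 + 6 from rfl,
        show (4 + 5 : ℕ) = 3 + 6 from rfl, hper, hper, hper] at h
    exact h
  -- conjugate hB by a^3 : d 3 = d 5 * d 0
  have hC : d 3 = d 5 * d 0 := by
    have h := congrArg (fun x => (a ^ 3)⁻¹ * x * a ^ 3) hB
    rw [hdadd, hDmul] at h
    rw [show (3 + 3 : ℕ) = 0 + 6 from rfl, hper] at h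
    exact h
  have h25 : d 2 * d 5 = 1 := by
    have h : d 0 = (d 2 * d 5) * d 0 := by
      rw [mul_assoc, ← hC]; exact hB
    exact (right_eq_mul.mp h)
  -- conjugate by a : d 3 * d 0 = 1
  have h30 : d 3 * d 0 = 1 := by
    have h := congrArg (fun x => (a ^ 1)⁻¹ * x * a ^ 1) h25
    rw [hDmul] at h
    rw [show (5 + 1 : ℕ) = 0 + 6 from rfl, hper] at h
    rw [show (a ^ 1)⁻¹ * 1 * a ^ 1 = 1 by group] at h
    exact h
  have h3 : d 3 = (d 0)⁻¹ := mul_eq_one_iff_eq_inv.mp h30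
  have h2 : d 2 = d 0 * d 0 := by
    have h : d 0 * d 0 = (d 2 * (d 0)⁻¹) * d 0 := by
      nth_rewrite 1 [hB]; rw [h3]
    rw [show (d 2 * (d 0)⁻¹) * d 0 = d 2 by group] at h
    exact h.symm
  have h4 : d 4 = d 2 * d 2 := by
    have h := congrArg (fun x => (a ^ 2)⁻¹ * x * a ^ 2) h2
    rw [hdadd, hDmul] at h
    exact h
  have h6 : d 0 = d 4 * d 4 := by
    have h := congrArg (fun x => (a ^ 2)⁻¹ * x * a ^ 2) h4
    rw [hdadd, hDmul] at h
    rw [show (4 + 2 : ℕ) = 0 + 6 from rfl, hper] at h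
    exact h
  have hc8 : c = c ^ 8 := by
    have h : d 0 = (d 0) ^ 8 := by
      calc d 0 = d 4 * d 4 := h6
        _ = (d 2 * d 2) * (d 2 * d 2) := by rw [h4]
        _ = ((d 0 * d 0) * (d 0 * d 0)) * ((d 0 * d 0) * (d 0 * d 0)) := by rw [h2]
        _ = (d 0) ^ 8 := by simp [pow_succ, mul_assoc]
    rwa [hd0] at h
  have h7 : c ^ 7 = c⁻¹ * c ^ 8 := by group
  rw [h7, ← hc8]
  group
end

section
/- Let G be a metabelian group with a, c ∈ G such that a^6 ∈ G' and c ∈ G'. Suppose G embeds in a group H containing an element x with x · (x^a)^{-1} · x^{a^2} = c. Then c · c^a · (c^{a^3})^{-1} · (c^{a^4})^{-1} lies in the second derived subgroup H'' of H. -/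
private lemma stmt8_aux {M : Type*} [CommGroup M] (y0 y1 y2 y3 y4 y5 : M) :
    (y0*y1⁻¹*y2) * (y1*y2⁻¹*y3) * (y3*y4⁻¹*y5)⁻¹ * (y4*y5⁻¹*y0)⁻¹ = 1 := by
  have h : ∀ z0 z1 z2 z3 z4 z5 : Additive M,
      (z0 + -z1 + z2) + (z1 + -z2 + z3) + -(z3 + -z4 + z5) + -(z4 + -z5 + z0) = 0 := by
    intros; abel
  exact h y0 y1 y2 y3 y4 y5

theorem stmt_8 {G H : Type*} [Group G] [Group H]
    (hmet : ∀ x ∈ commutator G, ∀ y ∈ commutator G, x * y = y * x)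
    (a c : G) (ha : a ^ 6 ∈ commutator G) (hc : c ∈ commutator G)
    (f : G →* H) (hf : Function.Injective f) (x : H)
    (hx : x * ((f a)⁻¹ * x * f a)⁻¹ * ((f a ^ 2)⁻¹ * x * f a ^ 2) = f c) :
    f c * ((f a)⁻¹ * f c * f a) * ((f a ^ 3)⁻¹ * f c * f a ^ 3)⁻¹ *
      ((f a ^ 4)⁻¹ * f c * f a ^ 4)⁻¹ ∈ derivedSeries H 2 := by
  haveI : (derivedSeries H 2).Normal := derivedSeries_normal H 2
  set N := derivedSeries H 2 with hNdef
  let Q := H ⧸ N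
  let π : H →* Q := QuotientGroup.mk' N
  letI : Bracket Q Q := commutatorElement
  -- the commutator subgroup of Q is abelian
  have hQ2 : derivedSeries Q 2 = ⊥ := by
    rw [← map_derivedSeries_eq (f := π) (QuotientGroup.mk'_surjective N) 2,
      ← hNdef, Subgroup.map_eq_bot_iff, QuotientGroup.ker_mk']
  have hcomm : ∀ u ∈ commutator Q, ∀ v ∈ commutator Q, u * v = v * u := by
    intro u hu v hv
    have h1 : ⁅u, v⁆ ∈ derivedSeries Q 2 := by
      have : derivedSeries Q 2 = ⁅commutator Q, commutator Q⁆ := by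
        rw [show (2:ℕ) = 1 + 1 from rfl, derivedSeries_succ, derivedSeries_one]
      rw [this]
      exact Subgroup.commutator_mem_commutator hu hv
    rw [hQ2, Subgroup.mem_bot] at h1
    exact (commutatorElement_eq_one_iff_mul_comm.mp h1)
  -- elements of commutator G map into commutator Q
  have hmapc : ∀ g : G, g ∈ commutator G → π (f g) ∈ commutator Q := by
    intro g hg
    have h1 : (π.comp f) g ∈ Subgroup.map (π.comp f) (commutator G) :=
      Subgroup.mem_map_of_mem _ hg
    have hle : Subgroup.map (π.comp f) (commutator G) ≤ commutator Q := by
      rw [commutator_def, Subgroup.map_commutator]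
      exact Subgroup.commutator_mono le_top le_top
    exact hle h1
  set A : Q := π (f a) with hA
  set C : Q := π (f c) with hC
  set X : Q := π x with hXdef
  have hCmem : C ∈ commutator Q := hmapc c hc
  have hA6 : A ^ 6 ∈ commutator Q := by
    have := hmapc (a ^ 6) ha
    rwa [map_pow, map_pow] at this
  -- image of hx in Q
  have hxq : X * (A⁻¹ * X * A)⁻¹ * ((A ^ 2)⁻¹ * X * A ^ 2) = C := by
    have := congrArg π hx
    simp only [map_mul, map_inv, map_pow, hA, hC, hXdef] at this ⊢
    exact this
  -- X lies in the commutator subgroup of Q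
  have hcommel : ⁅X⁻¹, A⁻¹⁆ ∈ commutator Q := by
    rw [commutator_def]
    exact Subgroup.commutator_mem_commutator (Subgroup.mem_top _) (Subgroup.mem_top _)
  have hconjmem : ∀ s : Q, s ∈ commutator Q → ∀ g : Q, g⁻¹ * s * g ∈ commutator Q := by
    intro s hs g
    have := (Subgroup.commutator_normal (⊤ : Subgroup Q) ⊤).conj_mem s hs g⁻¹
    rwa [inv_inv] at this
  have hXmem : X ∈ commutator Q := by
    have hw : X = C * (A⁻¹ * ⁅X⁻¹, A⁻¹⁆ * A)⁻¹ := by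
      rw [commutatorElement_def, ← hxq]; group
    rw [hw]
    exact mul_mem hCmem (inv_mem (hconjmem _ hcommel A))
  -- set up the abelian subgroup and the conjugation endomorphism
  letI S := (commutator Q)
  letI : CommGroup S :=
    { (inferInstance : Group S) with
      mul_comm := fun u v => Subtype.ext (hcomm u u.2 v v.2) }
  let φ : S →* S := MonoidHom.mk' (fun s => ⟨A⁻¹ * (s : Q) * A, hconjmem s s.2 A⟩)
    (by intro u v; apply Subtype.ext; show A⁻¹ * (u * v : Q) * A = _; push_cast; group)
  let X' : S := ⟨X, hXmem⟩
  let C' : S := ⟨C, hCmem⟩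
  have hrel : C' = X' * (φ X')⁻¹ * φ (φ X') := by
    apply Subtype.ext
    show C = X * (A⁻¹ * X * A)⁻¹ * (A⁻¹ * (A⁻¹ * X * A) * A)
    rw [← hxq]; group; norm_num [zpow_ofNat, pow_succ, mul_assoc]
  have hfix : φ (φ (φ (φ (φ (φ X'))))) = X' := by
    apply Subtype.ext
    show A⁻¹ * (A⁻¹ * (A⁻¹ * (A⁻¹ * (A⁻¹ * (A⁻¹ * X * A) * A) * A) * A) * A) * A = X
    have h6 : A⁻¹ * (A⁻¹ * (A⁻¹ * (A⁻¹ * (A⁻¹ * (A⁻¹ * X * A) * A) * A) * A) * A) * A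
        = (A ^ 6)⁻¹ * X * A ^ 6 := by group; norm_num [zpow_ofNat, pow_succ, mul_assoc]
    have hc6 : A ^ 6 * X = X * A ^ 6 := hcomm _ hA6 _ hXmem
    rw [h6, mul_assoc, ← hc6, ← mul_assoc, inv_mul_cancel, one_mul]
  have key : C' * φ C' * (φ (φ (φ C')))⁻¹ * (φ (φ (φ (φ C'))))⁻¹ = 1 := by
    rw [hrel]
    simp only [map_mul, map_inv, hfix]
    exact stmt8_aux X' (φ X') (φ (φ X')) (φ (φ (φ X'))) (φ (φ (φ (φ X'))))
      (φ (φ (φ (φ (φ X')))))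
  -- translate back
  have keyQ : C * (A⁻¹ * C * A) * ((A ^ 3)⁻¹ * C * A ^ 3)⁻¹ * ((A ^ 4)⁻¹ * C * A ^ 4)⁻¹
      = 1 := by
    have := congrArg (Subtype.val) key
    push_cast at this
    have hval : (C : Q) * (A⁻¹ * C * A) *
        (A⁻¹ * (A⁻¹ * (A⁻¹ * C * A) * A) * A)⁻¹ *
        (A⁻¹ * (A⁻¹ * (A⁻¹ * (A⁻¹ * C * A) * A) * A) * A)⁻¹ = 1 := this
    rw [← hval]; group
  rw [← QuotientGroup.eq_one_iff (N := N)
    (f c * ((f a)⁻¹ * f c * f a) * ((f a ^ 3)⁻¹ * f c * f a ^ 3)⁻¹ *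
      ((f a ^ 4)⁻¹ * f c * f a ^ 4)⁻¹)]
  show π (f c * ((f a)⁻¹ * f c * f a) * ((f a ^ 3)⁻¹ * f c * f a ^ 3)⁻¹ *
      ((f a ^ 4)⁻¹ * f c * f a ^ 4)⁻¹) = 1
  rw [← keyQ]
  simp only [map_mul, map_inv, map_pow, hA, hC]
end

section
/- Let G be a metabelian group with a, c ∈ G such that a^6 ∈ G', c ∈ G', and c · c^a · (c^{a^3})^{-1} · (c^{a^4})^{-1} ≠ 1. Then the equation x · (x^a)^{-1} · x^{a^2} = c over G has no solution in any metabelian group containing G. -/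
private lemma addver {M : Type*} [AddCommGroup M] (a b c d e g h : M) :
    (a - b + c) + (b - c + d) - (d - e + g) - (e - g + h) = a - h := by abel

private lemma mulver {M : Type*} [CommGroup M] (a b c d e g h : M) :
    (a * b⁻¹ * c) * (b * c⁻¹ * d) * (d * e⁻¹ * g)⁻¹ * (e * g⁻¹ * h)⁻¹ = a * h⁻¹ := by
  apply Additive.ofMul.injective
  simp only [ofMul_mul, ofMul_inv]
  abel

open scoped commutatorElement

theorem stmt_9 {G : Type*} [Group G]
    (hmet : ∀ x ∈ commutator G, ∀ y ∈ commutator G, x * y = y * x)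
    (a c : G) (ha : a ^ 6 ∈ commutator G) (hc : c ∈ commutator G)
    (hne : c * (a⁻¹ * c * a) * ((a ^ 3)⁻¹ * c * a ^ 3)⁻¹ * ((a ^ 4)⁻¹ * c * a ^ 4)⁻¹ ≠ 1)
    {H : Type*} [Group H] (f : G →* H) (hf : Function.Injective f)
    (hH : derivedSeries H 2 = ⊥) :
    ¬ ∃ x : H, x * ((f a)⁻¹ * x * f a)⁻¹ * ((f a ^ 2)⁻¹ * x * f a ^ 2) = f c := by
  rintro ⟨x, hx⟩
  set A := f a with hA
  set C := f c with hC
  -- commutator H is abelian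
  have hK : ∀ u ∈ commutator H, ∀ v ∈ commutator H, u * v = v * u := by
    intro u hu v hv
    have h2 : ⁅u, v⁆ ∈ derivedSeries H 2 := by
      rw [derivedSeries_succ]
      exact Subgroup.commutator_mem_commutator (by rwa [derivedSeries_one]) (by rwa [derivedSeries_one])
    rw [hH, Subgroup.mem_bot] at h2
    have := commutatorElement_eq_one_iff_mul_comm.mp h2
    exact this
  -- images of commutator G land in commutator H
  have hmap : (commutator G).map f ≤ commutator H := by
    rw [commutator_def, commutator_def, Subgroup.map_commutator]
    exact Subgroup.commutator_mono le_top le_top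
  have hCK : C ∈ commutator H := hmap (Subgroup.mem_map_of_mem f hc)
  have hA6K : A ^ 6 ∈ commutator H := by
    rw [hA, ← map_pow]
    exact hmap (Subgroup.mem_map_of_mem f ha)
  have hnorm : (commutator H).Normal := by rw [commutator_def]; infer_instance
  -- x is in the commutator subgroup
  have ht : x * (A⁻¹ * x * A)⁻¹ ∈ commutator H := by
    have : x * (A⁻¹ * x * A)⁻¹ = ⁅x, A⁻¹⁆ := by group
    rw [this, commutator_def]
    exact Subgroup.commutator_mem_commutator (Subgroup.mem_top x) (Subgroup.mem_top A⁻¹)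
  have hxc : (A ^ 2)⁻¹ * x * A ^ 2 ∈ commutator H := by
    have h2 : (A ^ 2)⁻¹ * x * A ^ 2 = (x * (A⁻¹ * x * A)⁻¹)⁻¹ * C := by
      rw [← hx]; group
    rw [h2]
    exact (commutator H).mul_mem (Subgroup.inv_mem _ ht) hCK
  have hxK : x ∈ commutator H := by
    have := hnorm.conj_mem _ hxc (A ^ 2)
    simpa [mul_assoc] using this
  -- the conjugates
  set y : ℕ → H := fun k => (A ^ k)⁻¹ * x * A ^ k with hy
  set cc : ℕ → H := fun k => (A ^ k)⁻¹ * C * A ^ k with hcc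
  have hyK : ∀ k, y k ∈ commutator H := by
    intro k
    have := hnorm.conj_mem _ hxK (A ^ k)⁻¹
    simpa [hy] using this
  have hccK : ∀ k, cc k ∈ commutator H := by
    intro k
    have := hnorm.conj_mem _ hCK (A ^ k)⁻¹
    simpa [hcc] using this
  have heq : ∀ k, y k * (y (k + 1))⁻¹ * y (k + 2) = cc k := by
    intro k
    simp only [hy, hcc]
    rw [← hx]
    group
  have hy6 : y 6 = y 0 := by
    have h1 : x * A ^ 6 = A ^ 6 * x := hK x hxK _ hA6K
    simp only [hy, pow_zero, inv_one, one_mul, mul_one]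
    rw [mul_assoc, h1, ← mul_assoc, inv_mul_cancel, one_mul]
  -- work inside the commutator subgroup, which is a CommGroup
  letI : CommGroup (commutator H) :=
    { (inferInstance : Group (commutator H)) with
      mul_comm := fun u v => Subtype.ext (hK u u.2 v v.2) }
  set Y : ℕ → commutator H := fun k => ⟨y k, hyK k⟩ with hY
  set Cc : ℕ → commutator H := fun k => ⟨cc k, hccK k⟩ with hCc
  have HEQ : ∀ k, Y k * (Y (k + 1))⁻¹ * Y (k + 2) = Cc k := fun k => Subtype.ext (heq k)
  have hY6 : Y 6 = Y 0 := Subtype.ext hy6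
  have key : Cc 0 * Cc 1 * (Cc 3)⁻¹ * (Cc 4)⁻¹ = 1 := by
    rw [← HEQ 0, ← HEQ 1, ← HEQ 3, ← HEQ 4]
    show Y 0 * (Y 1)⁻¹ * Y 2 * (Y 1 * (Y 2)⁻¹ * Y 3) * (Y 3 * (Y 4)⁻¹ * Y 5)⁻¹ *
      (Y 4 * (Y 5)⁻¹ * Y 6)⁻¹ = 1
    rw [mulver, hY6, mul_inv_cancel]
  have key' : cc 0 * cc 1 * (cc 3)⁻¹ * (cc 4)⁻¹ = 1 := congrArg Subtype.val key
  have hone : C * (A⁻¹ * C * A) * ((A ^ 3)⁻¹ * C * A ^ 3)⁻¹ * ((A ^ 4)⁻¹ * C * A ^ 4)⁻¹ = 1 := by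
    simpa [hcc, pow_zero, pow_one] using key'
  apply hne
  apply hf
  rw [map_one]
  simpa [map_mul, map_inv, map_pow, ← hA, ← hC] using hone
end

section
/- In the group G = ⟨c⟩_7 ⋊ ⟨a⟩_6 with c^a = c^5 (cyclic group of order 7 extended by an order-6 automorphism), one has a^6 = 1 ∈ G', c ∈ G', and c · c^a · (c^{a^3})^{-1} · (c^{a^4})^{-1} ≠ 1; consequently the unimodular equation x (x^a)^{-1} x^{a^2} = c over G has no solution in any metabelian group. -/
lemma zmod7_pow7 (x : Multiplicative (ZMod 7)) : x ^ 7 = 1 := by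
  have : x ^ Fintype.card (Multiplicative (ZMod 7)) = 1 := pow_card_eq_one
  simpa using this

/-- The automorphism `c ↦ c⁵` of the cyclic group of order 7. -/
def aut5 : MulAut (Multiplicative (ZMod 7)) where
  toFun x := x ^ 5
  invFun x := x ^ 3
  left_inv := by
    intro x
    show (x ^ 5) ^ 3 = x
    rw [← pow_mul, show (5 * 3 : ℕ) = 7 * 2 + 1 from rfl, pow_add, pow_mul,
      zmod7_pow7, one_pow, one_mul, pow_one]
  right_inv := by
    intro x
    show (x ^ 3) ^ 5 = x
    rw [← pow_mul, show (3 * 5 : ℕ) = 7 * 2 + 1 from rfl, pow_add, pow_mul,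
      zmod7_pow7, one_pow, one_mul, pow_one]
  map_mul' := fun x y => mul_pow x y 5

lemma aut5_pow (k : ℕ) : ∀ x : Multiplicative (ZMod 7), (aut5 ^ k) x = x ^ 5 ^ k := by
  induction k with
  | zero => intro x; simp
  | succ m ih =>
    intro x
    have h : (aut5 ^ (m + 1)) x = (aut5 ^ m) (x ^ 5) := by rw [pow_succ]; rfl
    rw [h, ih (x ^ 5), ← pow_mul, pow_succ, mul_comm]

lemma aut5_pow_six : aut5 ^ 6 = 1 := by
  refine MulEquiv.ext fun x => ?_
  rw [aut5_pow 6 x]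
  show _ = x
  rw [show (5 ^ 6 : ℕ) = 7 * 2232 + 1 from rfl, pow_add, pow_mul, zmod7_pow7,
    one_pow, one_mul, pow_one]

/-- The action of `⟨a⟩₆ = ZMod 6` on `⟨c⟩₇` sending `a` to `c ↦ c⁵`. -/
def phi57 : Multiplicative (ZMod 6) →* MulAut (Multiplicative (ZMod 7)) where
  toFun k := aut5 ^ (k.toAdd.val)
  map_one' := by simp [ZMod.val]; exact pow_zero _
  map_mul' := by
    intro x y
    show aut5 ^ ((x.toAdd + y.toAdd).val) = aut5 ^ x.toAdd.val * aut5 ^ y.toAdd.val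
    rw [← pow_add]
    have h : ((x.toAdd + y.toAdd).val : ZMod 6) = ((x.toAdd.val + y.toAdd.val : ℕ) : ZMod 6) := by
      simp [ZMod.natCast_val]
    have hmod := (ZMod.natCast_eq_natCast_iff _ _ _).mp h
    have key : ∀ p q : ℕ, p ≡ q [MOD 6] → aut5 ^ p = aut5 ^ q := by
      intro p q hpq
      rw [Nat.ModEq] at hpq
      calc aut5 ^ p = aut5 ^ (p % 6 + 6 * (p / 6)) := by rw [Nat.mod_add_div]
        _ = aut5 ^ (p % 6) := by rw [pow_add, pow_mul, aut5_pow_six, one_pow, mul_one]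
        _ = aut5 ^ (q % 6) := by rw [hpq]
        _ = aut5 ^ (q % 6 + 6 * (q / 6)) := by
            rw [pow_add, pow_mul, aut5_pow_six, one_pow, mul_one]
        _ = aut5 ^ q := by rw [Nat.mod_add_div]
    exact key _ _ hmod

/-- The group `⟨c⟩₇ ⋊ ⟨a⟩₆ `with `cᵃ = c⁵`. -/
abbrev G42 := SemidirectProduct (Multiplicative (ZMod 7)) (Multiplicative (ZMod 6)) phi57

/-- `a` is the generator of `⟨a⟩₆`, `c` the generator of `⟨c⟩₇`. -/
def a42 : G42 := SemidirectProduct.inr (Multiplicative.ofAdd (1 : ZMod 6))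
def c42 : G42 := SemidirectProduct.inl (Multiplicative.ofAdd (1 : ZMod 7))

instance : DecidableEq G42 := fun x y =>
  decidable_of_iff (x.left = y.left ∧ x.right = y.right) (by
    constructor
    · rintro ⟨h1, h2⟩; exact SemidirectProduct.ext h1 h2
    · rintro rfl; exact ⟨rfl, rfl⟩)

lemma key42 {M : Type*} [Group M] (S : Subgroup M)
    (hcomm : ∀ g ∈ S, ∀ h ∈ S, g * h = h * g)
    {y0 y1 y2 y3 y4 y5 c0 c1 c3 c4 : M}
    (m0 : y0 ∈ S) (m1 : y1 ∈ S) (m2 : y2 ∈ S) (m3 : y3 ∈ S) (m4 : y4 ∈ S) (m5 : y5 ∈ S)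
    (e0 : y0 * y1⁻¹ * y2 = c0) (e1 : y1 * y2⁻¹ * y3 = c1)
    (e3 : y3 * y4⁻¹ * y5 = c3) (e4 : y4 * y5⁻¹ * y0 = c4) :
    c0 * c1 * c3⁻¹ * c4⁻¹ = 1 := by
  have h21 : y2 * y1 = y1 * y2 := hcomm _ m2 _ m1
  have h04 : Commute y0 y4 := hcomm _ m0 _ m4
  have h34 : Commute y3 y4 := hcomm _ m3 _ m4
  have h45 : Commute y4 y5 := hcomm _ m4 _ m5
  have h05 : Commute y0 y5 := hcomm _ m0 _ m5
  have h35 : Commute y3 y5 := hcomm _ m3 _ m5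
  have hA : c0 * c1 = y0 * y3 := by
    rw [← e0, ← e1]
    calc (y0 * y1⁻¹ * y2) * (y1 * y2⁻¹ * y3)
        = y0 * y1⁻¹ * (y2 * y1) * y2⁻¹ * y3 := by group
      _ = y0 * y1⁻¹ * (y1 * y2) * y2⁻¹ * y3 := by rw [h21]
      _ = y0 * y3 := by group
  have q1 : (y0 * y3) * y4⁻¹ = y4⁻¹ * (y0 * y3) := ((h04.mul_left h34).inv_right).eq
  have q3 : y5⁻¹ * y4⁻¹ = y4⁻¹ * y5⁻¹ := ((h45.inv_left).inv_right).eq.symm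
  have q5 : (y0 * y3) * y5 = y5 * (y0 * y3) := (h05.mul_left h35).eq
  have hB : c4 * c3 = y0 * y3 := by
    rw [← e3, ← e4]
    calc (y4 * y5⁻¹ * y0) * (y3 * y4⁻¹ * y5)
        = (y4 * y5⁻¹) * ((y0 * y3) * y4⁻¹) * y5 := by group
      _ = (y4 * y5⁻¹) * (y4⁻¹ * (y0 * y3)) * y5 := by rw [q1]
      _ = (y4 * (y5⁻¹ * y4⁻¹)) * ((y0 * y3) * y5) := by group
      _ = (y4 * (y4⁻¹ * y5⁻¹)) * (y5 * (y0 * y3)) := by rw [q3, q5]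
      _ = y0 * y3 := by group
  rw [hA, ← hB]
  group

open scoped commutatorElement

/-- In `G = ⟨c⟩₇ ⋊ ⟨a⟩₆` with `cᵃ = c⁵` one has `a⁶ = 1 ∈ G'`, `c ∈ G'`, and
`c · cᵃ · (c^(a³))⁻¹ · (c^(a⁴))⁻¹ ≠ 1`; consequently the unimodular equation
`x (xᵃ)⁻¹ x^(a²) = c` over `G` has no solution in any metabelian group. -/
theorem stmt_10 :
    a42 ^ 6 = 1 ∧ a42 ^ 6 ∈ commutator G42 ∧ c42 ∈ commutator G42 ∧
    c42 * (a42⁻¹ * c42 * a42) * ((a42 ^ 3)⁻¹ * c42 * a42 ^ 3)⁻¹ *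
      ((a42 ^ 4)⁻¹ * c42 * a42 ^ 4)⁻¹ ≠ 1 ∧
    ∀ (H : Type) (_ : Group H) (f : G42 →* H), Function.Injective f →
      derivedSeries H 2 = ⊥ →
      ¬ ∃ x : H, x * ((f a42)⁻¹ * x * f a42)⁻¹ * ((f a42 ^ 2)⁻¹ * x * f a42 ^ 2) = f c42 := by
  have h1 : a42 ^ 6 = 1 := by decide
  have hc : c42 = ⁅a42, c42⁆ ^ 2 := by decide
  have h3 : c42 ∈ commutator G42 := by
    rw [hc, commutator_def]
    exact Subgroup.pow_mem _
      (Subgroup.commutator_mem_commutator (Subgroup.mem_top _) (Subgroup.mem_top _)) 2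
  have h4 : c42 * (a42⁻¹ * c42 * a42) * ((a42 ^ 3)⁻¹ * c42 * a42 ^ 3)⁻¹ *
      ((a42 ^ 4)⁻¹ * c42 * a42 ^ 4)⁻¹ ≠ 1 := by decide
  refine ⟨h1, by rw [h1]; exact Subgroup.one_mem _, h3, h4, ?_⟩
  rintro H _ f hf hmeta ⟨x, hx⟩
  set A := f a42 with hA
  set C := f c42 with hC
  have hA6 : A ^ 6 = 1 := by rw [hA, ← map_pow, h1, map_one]
  -- C is in the commutator subgroup of H
  have hCK : C ∈ commutator H := by
    have hmem : C ∈ Subgroup.map f (commutator G42) := Subgroup.mem_map_of_mem f h3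
    rw [commutator_def, Subgroup.map_commutator] at hmem
    rw [commutator_def]
    exact Subgroup.commutator_mono le_top le_top hmem
  -- x is in the commutator subgroup of H (abelianization argument)
  have hxK : x ∈ commutator H := by
    have hox : Abelianization.of x = Abelianization.of C := by
      have := congrArg Abelianization.of hx
      simp only [map_mul, map_inv, map_pow] at this
      rw [← this]
      have l1 : ∀ u v : Abelianization H, u⁻¹ * v * u = v := fun u v => by
        rw [mul_comm u⁻¹ v, mul_assoc, inv_mul_cancel, mul_one]
      rw [l1, l1]
      simp
    have hx1 : Abelianization.of (x * C⁻¹) = 1 := by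
      rw [map_mul, map_inv, hox, mul_inv_cancel]
    have hmem : x * C⁻¹ ∈ commutator H := (QuotientGroup.eq_one_iff _).mp hx1
    have := mul_mem hmem hCK
    simpa using this
  -- the commutator subgroup is abelian
  have comm : ∀ g ∈ commutator H, ∀ h ∈ commutator H, g * h = h * g := by
    intro g hg h hh
    have : ⁅g, h⁆ ∈ (⊥ : Subgroup H) := by
      rw [← hmeta]
      have h2 : derivedSeries H 2 = ⁅derivedSeries H 1, derivedSeries H 1⁆ :=
        derivedSeries_succ H 1
      rw [h2, derivedSeries_one]
      exact Subgroup.commutator_mem_commutator hg hh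
    rw [Subgroup.mem_bot] at this
    exact commutatorElement_eq_one_iff_mul_comm.mp this
  haveI hN : (commutator H).Normal := by rw [commutator_def]; infer_instance
  -- conjugates of x and C
  have yK : ∀ g : H, x ∈ commutator H → g⁻¹ * x * g ∈ commutator H := by
    intro g hxm
    have := hN.conj_mem x hxm g⁻¹
    simpa using this
  have cK : ∀ g : H, g⁻¹ * C * g ∈ commutator H := by
    intro g
    have := hN.conj_mem C hCK g⁻¹
    simpa using this
  -- the four conjugated equations
  have E1 : (A⁻¹ * x * A) * ((A ^ 2)⁻¹ * x * A ^ 2)⁻¹ * ((A ^ 3)⁻¹ * x * A ^ 3)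
      = A⁻¹ * C * A := by rw [← hx]; group
  have E3 : ((A ^ 3)⁻¹ * x * A ^ 3) * ((A ^ 4)⁻¹ * x * A ^ 4)⁻¹ * ((A ^ 5)⁻¹ * x * A ^ 5)
      = (A ^ 3)⁻¹ * C * A ^ 3 := by rw [← hx]; group
  have E4' : ((A ^ 4)⁻¹ * x * A ^ 4) * ((A ^ 5)⁻¹ * x * A ^ 5)⁻¹ * ((A ^ 6)⁻¹ * x * A ^ 6)
      = (A ^ 4)⁻¹ * C * A ^ 4 := by rw [← hx]; group
  have h6 : (A ^ 6)⁻¹ * x * A ^ 6 = x := by rw [hA6]; group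
  rw [h6] at E4'
  have hfin := key42 (commutator H) comm hxK (yK A hxK) (yK (A ^ 2) hxK)
    (yK (A ^ 3) hxK) (yK (A ^ 4) hxK) (yK (A ^ 5) hxK) hx E1 E3 E4'
  apply h4
  apply hf
  rw [map_one, ← hfin, hA, hC]
  simp [map_mul, map_inv, map_pow]
end

section
/- Let G be a metabelian group with a, c ∈ G such that a^6 ∈ G', c ∈ G', and g := c·c^a·(c^{a^3})^{-1}·(c^{a^4})^{-1} ≠ 1. If c has finite order n coprime to 6, then g has finite order coprime to 6, g^{a^3} = g^{-1}, and g·(g^a)^{-1}·g^{a^2} = 1. -/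
lemma aux_pow {H : Type*} [CommGroup H] (x y z w : H) (n : ℕ) :
    (x * y * z⁻¹ * w⁻¹) ^ n = x ^ n * y ^ n * (z ^ n)⁻¹ * (w ^ n)⁻¹ := by
  simp [mul_pow, inv_pow]

lemma aux_inv {H : Type*} [CommGroup H] (x y z w : H) :
    z * w * x⁻¹ * y⁻¹ = (x * y * z⁻¹ * w⁻¹)⁻¹ := by
  apply Additive.ofMul.injective
  show Additive.ofMul (z * w * x⁻¹ * y⁻¹) = Additive.ofMul ((x * y * z⁻¹ * w⁻¹)⁻¹)
  simp only [ofMul_mul, ofMul_inv]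
  abel

lemma aux_tri {H : Type*} [CommGroup H] (x0 x1 x2 x3 x4 x5 : H) :
    (x0 * x1 * x3⁻¹ * x4⁻¹) * (x1 * x2 * x4⁻¹ * x5⁻¹)⁻¹ * (x2 * x3 * x5⁻¹ * x0⁻¹) = 1 := by
  apply Additive.ofMul.injective
  show Additive.ofMul ((x0 * x1 * x3⁻¹ * x4⁻¹) * (x1 * x2 * x4⁻¹ * x5⁻¹)⁻¹
      * (x2 * x3 * x5⁻¹ * x0⁻¹)) = Additive.ofMul 1
  simp only [ofMul_mul, ofMul_inv, ofMul_one]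
  abel

theorem stmt_13 {G : Type*} [Group G]
    (hmet : ∀ x ∈ commutator G, ∀ y ∈ commutator G, x * y = y * x)
    (a c : G) (ha : a ^ 6 ∈ commutator G) (hc : c ∈ commutator G)
    (g : G)
    (hg : g = c * (a⁻¹ * c * a) * ((a ^ 3)⁻¹ * c * a ^ 3)⁻¹ * ((a ^ 4)⁻¹ * c * a ^ 4)⁻¹)
    (hg1 : g ≠ 1)
    (hfin : IsOfFinOrder c) (hcop : Nat.Coprime (orderOf c) 6) :
    IsOfFinOrder g ∧ Nat.Coprime (orderOf g) 6 ∧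
      (a ^ 3)⁻¹ * g * a ^ 3 = g⁻¹ ∧
      g * (a⁻¹ * g * a)⁻¹ * ((a ^ 2)⁻¹ * g * a ^ 2) = 1 := by
  letI : CommGroup (commutator G) :=
    { (inferInstance : Group (commutator G)) with
      mul_comm := fun x y => Subtype.ext (hmet x x.2 y y.2) }
  have hmem : ∀ k : ℕ, (a ^ k)⁻¹ * c * a ^ k ∈ commutator G := by
    intro k
    simpa using (Subgroup.Normal.conj_mem inferInstance c hc (a ^ k)⁻¹)
  set d : ℕ → commutator G := fun k => ⟨(a ^ k)⁻¹ * c * a ^ k, hmem k⟩ with hd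
  have hcoe : ∀ k, (d k : G) = (a ^ k)⁻¹ * c * a ^ k := fun k => rfl
  have hconj : ∀ k i : ℕ, (a ^ k)⁻¹ * ((a ^ i)⁻¹ * c * a ^ i) * a ^ k
      = (a ^ (i + k))⁻¹ * c * a ^ (i + k) := by
    intro k i; rw [pow_add]; group
  have h6 : (a ^ 6)⁻¹ * c * a ^ 6 = c := by
    rw [mul_assoc, ← hmet (a ^ 6) ha c hc]; group
  have hd6 : d 6 = d 0 := by
    apply Subtype.ext; rw [hcoe, hcoe, h6]; simp
  have hd7 : d 7 = d 1 := by
    apply Subtype.ext; rw [hcoe, hcoe, pow_one, pow_succ]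
    calc (a ^ 6 * a)⁻¹ * c * (a ^ 6 * a)
        = a⁻¹ * ((a ^ 6)⁻¹ * c * a ^ 6) * a := by group
      _ = a⁻¹ * c * a := by rw [h6]
  have hgd : g = ((d 0 * d 1 * (d 3)⁻¹ * (d 4)⁻¹ : commutator G) : G) := by
    push_cast [hcoe]
    rw [hg]; simp
  have conj_g : ∀ k : ℕ, (a ^ k)⁻¹ * g * a ^ k
      = ((d (0 + k) * d (1 + k) * (d (3 + k))⁻¹ * (d (4 + k))⁻¹ : commutator G) : G) := by
    intro k
    rw [hgd]
    push_cast [hcoe]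
    have expand : ∀ x y z w : G, (a ^ k)⁻¹ * (x * y * z⁻¹ * w⁻¹) * a ^ k
        = ((a ^ k)⁻¹ * x * a ^ k) * ((a ^ k)⁻¹ * y * a ^ k) * ((a ^ k)⁻¹ * z * a ^ k)⁻¹
          * ((a ^ k)⁻¹ * w * a ^ k)⁻¹ := by intros; group
    rw [expand, hconj k 0, hconj k 1, hconj k 3, hconj k 4]
  set n := orderOf c with hn
  have hdn : ∀ i, (d i) ^ n = 1 := by
    intro i
    apply Subtype.ext
    push_cast [hcoe]
    have : ((a ^ i)⁻¹ * c * ((a ^ i)⁻¹)⁻¹) ^ n = (a ^ i)⁻¹ * c ^ n * ((a ^ i)⁻¹)⁻¹ :=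
      conj_pow
    simp only [inv_inv] at this
    rw [this, pow_orderOf_eq_one]
    simp
  have hgn : g ^ n = 1 := by
    rw [hgd, ← Subgroup.coe_pow, aux_pow, hdn, hdn, hdn, hdn]
    simp
  have hnpos : 0 < n := hfin.orderOf_pos
  have hfing : IsOfFinOrder g := isOfFinOrder_iff_pow_eq_one.mpr ⟨n, hnpos, hgn⟩
  have hdvd : orderOf g ∣ n := orderOf_dvd_of_pow_eq_one hgn
  refine ⟨hfing, Nat.Coprime.coprime_dvd_left hdvd hcop, ?_, ?_⟩
  · have c3 := conj_g 3
    simp only [Nat.reduceAdd] at c3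
    rw [hd6, hd7] at c3
    rw [c3, hgd, ← Subgroup.coe_inv]
    exact congrArg _ (aux_inv _ _ _ _)
  · have c1 := conj_g 1
    rw [pow_one] at c1
    simp only [Nat.reduceAdd] at c1
    have c2 := conj_g 2
    simp only [Nat.reduceAdd] at c2
    rw [hd6] at c2
    rw [c1, c2, hgd, ← Subgroup.coe_inv, ← Subgroup.coe_mul, ← Subgroup.coe_mul,
      show ((1:G)) = ((1 : commutator G) : G) by simp]
    exact congrArg _ (aux_tri _ _ _ _ _ _)
end

section
/- Let G be a metabelian group with a, c ∈ G such that a^6 ∈ G', c ∈ G', and g := c·c^a·(c^{a^3})^{-1}·(c^{a^4})^{-1} ≠ 1. If c has finite order coprime to 6, then g·g^a·(g^{a^3})^{-1}·(g^{a^4})^{-1} ≠ 1. -/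
private theorem aux_ac {A : Type*} [CommGroup A] (x0 x1 x3 x4 : A) :
    x3 * x4 * x0⁻¹ * x1⁻¹ = x4 * (x3 * (x1⁻¹ * x0⁻¹)) := by
  simp [mul_comm, mul_left_comm, mul_assoc]

private theorem aux_ac2 {A : Type*} [CommGroup A] (x0 x1 x2 x3 x4 x5 : A) :
    x2 * x3 * x5⁻¹ * x0⁻¹ = x1 * x2 * x4⁻¹ * x5⁻¹ * (x4 * (x3 * (x1⁻¹ * x0⁻¹))) := by
  apply Additive.ofMul.injective
  simp only [ofMul_mul, ofMul_inv]
  abel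

theorem stmt_14 {G : Type*} [Group G]
    (hmet : ∀ x ∈ commutator G, ∀ y ∈ commutator G, x * y = y * x)
    (a c : G) (ha : a ^ 6 ∈ commutator G) (hc : c ∈ commutator G)
    (g : G)
    (hg : g = c * (a⁻¹ * c * a) * ((a ^ 3)⁻¹ * c * a ^ 3)⁻¹ * ((a ^ 4)⁻¹ * c * a ^ 4)⁻¹)
    (hg1 : g ≠ 1)
    (hfin : IsOfFinOrder c) (hcop : Nat.Coprime (orderOf c) 6) :
    g * (a⁻¹ * g * a) * ((a ^ 3)⁻¹ * g * a ^ 3)⁻¹ * ((a ^ 4)⁻¹ * g * a ^ 4)⁻¹ ≠ 1 := by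
  letI : CommGroup (commutator G) :=
    { (inferInstance : Group (commutator G)) with
      mul_comm := fun x y => Subtype.ext (hmet x.1 x.2 y.1 y.2) }
  set σ : MulAut (commutator G) := MulAut.conjNormal (a⁻¹ : G) with hσdef
  have hσ : ∀ (k : ℕ) (x : commutator G), (((σ ^ k) x : G)) = (a ^ k)⁻¹ * x * a ^ k := by
    intro k x
    have h1 : σ ^ k = MulAut.conjNormal ((a⁻¹) ^ k) := by
      rw [hσdef, ← map_pow]
    rw [h1, MulAut.conjNormal_apply, inv_pow, inv_inv]
  have h6 : ∀ x : commutator G, (σ ^ 6) x = x := by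
    intro x
    have h := hmet (a ^ 6) ha x x.2
    ext
    rw [hσ]
    rw [mul_assoc, ← h, ← mul_assoc, inv_mul_cancel, one_mul]
  have comp : ∀ (i j : ℕ) (x : commutator G), (σ ^ i) ((σ ^ j) x) = (σ ^ (i + j)) x := by
    intro i j x
    rw [pow_add]
    rfl
  set C : commutator G := ⟨c, hc⟩ with hC
  set gK : commutator G := C * σ C * ((σ ^ 3) C)⁻¹ * ((σ ^ 4) C)⁻¹ with hgK
  have hσ1 : ∀ x : commutator G, σ x = (σ ^ 1) x := by intro x; rw [pow_one]
  have hcoe : (gK : G) = g := by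
    rw [hg, hgK]
    push_cast
    rw [hσ1 C, hσ, hσ, hσ, pow_one]
  -- g^a etc as coercions
  have hcoeg : ∀ k : ℕ, (((σ ^ k) gK : G)) = (a ^ k)⁻¹ * g * a ^ k := by
    intro k; rw [hσ, hcoe]
  -- order facts
  have hn : orderOf C = orderOf c :=
    (orderOf_injective (commutator G).subtype (Subgroup.subtype_injective _) C).symm
  have hCn : C ^ orderOf c = 1 := by rw [← hn]; exact pow_orderOf_eq_one C
  have hgKn : gK ^ orderOf c = 1 := by
    simp [hgK, mul_pow, inv_pow, ← map_pow, hCn]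
  have hm6 : Nat.Coprime (orderOf gK) 6 :=
    Nat.Coprime.coprime_dvd_left (orderOf_dvd_of_pow_eq_one hgKn) hcop
  -- key identities
  have h7 : (σ ^ 7) C = σ C := by
    rw [show (7:ℕ) = 6 + 1 from rfl, pow_succ', MulAut.mul_apply, h6]
  have hB : (σ ^ 3) gK = gK⁻¹ := by
    rw [hgK]
    simp only [map_mul, map_inv, hσ1 C, comp]
    norm_num
    rw [h6, h7]
    exact aux_ac C (σ C) ((σ ^ 3) C) ((σ ^ 4) C)
  have hA : (σ ^ 2) gK = σ gK * gK⁻¹ := by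
    rw [hgK]
    simp only [map_mul, map_inv, hσ1 C, comp]
    norm_num
    rw [h6]
    have e2 : σ (σ C) = (σ ^ 2) C := by
      conv_rhs => rw [show (2:ℕ) = 1 + 1 from rfl, pow_succ', MulAut.mul_apply, pow_one]
    have e4 : σ ((σ ^ 3) C) = (σ ^ 4) C := by
      conv_rhs => rw [show (4:ℕ) = 3 + 1 from rfl, pow_succ', MulAut.mul_apply]
    have e5 : σ ((σ ^ 4) C) = (σ ^ 5) C := by
      conv_rhs => rw [show (5:ℕ) = 4 + 1 from rfl, pow_succ', MulAut.mul_apply]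
    rw [e2, e4, e5]
    exact aux_ac2 C (σ C) ((σ ^ 2) C) ((σ ^ 3) C) ((σ ^ 4) C) ((σ ^ 5) C)
  intro hcon
  -- translate hcon into K
  have hH : gK * σ gK * ((σ ^ 3) gK)⁻¹ * ((σ ^ 4) gK)⁻¹ = 1 := by
    ext
    push_cast
    rw [hσ1 gK, hcoeg, hcoeg, hcoeg, pow_one, hcoe]
    exact hcon
  have hσ4 : (σ ^ 4) gK = (σ gK)⁻¹ := by
    rw [show (4:ℕ) = 3 + 1 from rfl, pow_succ', MulAut.mul_apply, hB, map_inv]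
  rw [hB, hσ4, inv_inv, inv_inv] at hH
  -- t = gK * σ gK, t^2 = 1
  have ht2 : (gK * σ gK) ^ 2 = 1 := by
    rw [pow_two]
    rw [show gK * σ gK * (gK * σ gK) = gK * σ gK * gK * σ gK by group]
    exact hH
  have htm : (gK * σ gK) ^ orderOf c = 1 := by
    rw [mul_pow, ← map_pow, hgKn, map_one, one_mul]
  have hto : orderOf (gK * σ gK) ∣ Nat.gcd (orderOf c) 2 :=
    Nat.dvd_gcd (orderOf_dvd_of_pow_eq_one htm) (orderOf_dvd_of_pow_eq_one ht2)
  have hc2 : Nat.Coprime (orderOf c) 2 :=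
    Nat.Coprime.coprime_dvd_right (by norm_num) hcop
  rw [hc2] at hto
  have ht1 : gK * σ gK = 1 := orderOf_eq_one_iff.mp (Nat.dvd_one.mp hto)
  have hσg : σ gK = gK⁻¹ := (mul_eq_one_iff_inv_eq.mp ht1).symm
  -- derive gK^3 = 1
  have h3 : (σ ^ 3) gK = gK * gK := by
    have e1 : (σ ^ 3) gK = σ ((σ ^ 2) gK) := by
      rw [show (3:ℕ) = 2 + 1 from rfl, pow_succ', MulAut.mul_apply]
    rw [e1, hA, map_mul, map_inv, hσg, map_inv, hσg, inv_inv]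
  have hgK3 : gK ^ 3 = 1 := by
    have := hB.symm.trans h3
    -- gK⁻¹ = gK * gK
    rw [show (3:ℕ) = 2 + 1 by norm_num, pow_add, pow_two, pow_one, ← this, inv_mul_cancel]
  have hm3 : Nat.Coprime (orderOf gK) 3 :=
    Nat.Coprime.coprime_dvd_right (by norm_num) hm6
  have : orderOf gK ∣ Nat.gcd (orderOf gK) 3 :=
    Nat.dvd_gcd dvd_rfl (orderOf_dvd_of_pow_eq_one hgK3)
  rw [hm3] at this
  have hgK1 : gK = 1 := orderOf_eq_one_iff.mp (Nat.dvd_one.mp this)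
  apply hg1
  rw [← hcoe, hgK1]
  rfl
end

section
/- In the group G = (⟨b⟩_n × ⟨d⟩_n) ⋊ ⟨a⟩_6 with b^a = bd, d^a = b^{-1}, set c = b and g = c·c^a·(c^{a^3})^{-1}·(c^{a^4})^{-1}. Then g = b^4 d^2 and g·g^a·(g^{a^3})^{-1}·(g^{a^4})^{-1} = b^{12} d^{12}. In particular, if n = 3 or n = 4, then g ≠ 1 but g·g^a·(g^{a^3})^{-1}·(g^{a^4})^{-1} = 1. -/
/-- The automorphism of `⟨b⟩ₙ × ⟨d⟩ₙ` (written additively as `ZMod n × ZMod n`)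
given by `b ↦ bd`, `d ↦ b⁻¹`, i.e. `(x, y) ↦ (x - y, x)`; in the semidirect product
`(⟨b⟩ₙ × ⟨d⟩ₙ) ⋊ ⟨a⟩₆` conjugation by `a` acts on the base by this automorphism,
so `c^(aᵏ)` corresponds to `(sigmaAut n)^k` applied to `c`. -/
def sigmaAut (n : ℕ) : AddAut (ZMod n × ZMod n) where
  toFun p := (p.1 - p.2, p.1)
  invFun p := (p.2, p.2 - p.1)
  left_inv := by intro p; simp
  right_inv := by intro p; simp
  map_add' := by intro p q; simp [Prod.ext_iff]; ring

theorem stmt_16 (n : ℕ)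
    (c : ZMod n × ZMod n) (hc : c = (1, 0))
    (g : ZMod n × ZMod n)
    (hg : g = c + sigmaAut n c - (3 • sigmaAut n) c - (4 • sigmaAut n) c) :
    g = (4, 2) ∧
    g + sigmaAut n g - (3 • sigmaAut n) g - (4 • sigmaAut n) g = (12, 12) ∧
    ((n = 3 ∨ n = 4) →
      g ≠ 0 ∧ g + sigmaAut n g - (3 • sigmaAut n) g - (4 • sigmaAut n) g = 0) := by
  subst hc
  have hg' : g = (4, 2) := by
    rw [hg]
    simp [sigmaAut, succ_nsmul, Prod.ext_iff]
    constructor <;> ring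
  have h2 : g + sigmaAut n g - (3 • sigmaAut n) g - (4 • sigmaAut n) g = (12, 12) := by
    rw [hg']
    simp [sigmaAut, succ_nsmul, Prod.ext_iff]
    constructor <;> ring
  refine ⟨hg', h2, ?_⟩
  rintro (rfl | rfl)
  · refine ⟨by rw [hg']; decide, by rw [h2]; decide⟩
  · refine ⟨by rw [hg']; decide, by rw [h2]; decide⟩
end

section
/- For every integer n ≥ 2 there exists a solvable group H of derived length exactly n, elements a, c ∈ H, and a unimodular equation x·(x^a)^{-1}·x^{a^2} = c over H, such that for every group K ⊇ H containing a solution x of this equation, the n-th derived subgroup K^{(n)} is nontrivial; i.e., the equation has no solution in any solvable group of derived length n. -/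
open Subgroup
open scoped commutatorElement

namespace Stmt18


variable {K : Type*} [Group K]

/-- If the range of `φ` lands in the `k`-th derived subgroup, images of the `m`-th derived
subgroup land in the `(k+m)`-th. -/
lemma map_derived_le {Γ : Type*} [Group Γ] (φ : Γ →* K) (k : ℕ)
    (h : ∀ γ, φ γ ∈ derivedSeries K k) (m : ℕ) :
    (derivedSeries Γ m).map φ ≤ derivedSeries K (k + m) := by
  induction m with
  | zero => rintro _ ⟨γ, -, rfl⟩; exact h γ
  | succ m ih =>
    have : k + (m + 1) = (k + m) + 1 := rfl
    rw [this, derivedSeries_succ, derivedSeries_succ, Subgroup.map_commutator]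
    exact Subgroup.commutator_mono ih ih

lemma derived_ne_bot_of {Γ B : Type*} [Group Γ] [Group B] (φ : Γ →* K)
    (hinj : Function.Injective φ) (k : ℕ) (hr : ∀ γ, φ γ ∈ derivedSeries K k)
    (ρ : Γ →* B) (hsurj : Function.Surjective ρ) (m : ℕ) (hB : derivedSeries B m ≠ ⊥) :
    derivedSeries K (k + m) ≠ ⊥ := by
  have h1 : derivedSeries Γ m ≠ ⊥ := by
    intro h
    apply hB
    rw [← map_derivedSeries_eq hsurj m, h]
    exact Subgroup.map_bot ρ
  obtain ⟨γ, hγ, hne⟩ : ∃ γ ∈ derivedSeries Γ m, γ ≠ 1 := by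
    by_contra h
    push_neg at h
    exact h1 ((eq_bot_iff_forall _).mpr h)
  intro h
  have hm : φ γ ∈ derivedSeries K (k + m) :=
    map_derived_le φ k hr m (Subgroup.mem_map_of_mem φ hγ)
  rw [h, Subgroup.mem_bot] at hm
  exact hne (hinj (hm.trans (map_one φ).symm))

lemma derived_pi_eq_bot {ι B : Type*} [Group B] (m : ℕ) (hB : derivedSeries B m = ⊥) :
    derivedSeries (ι → B) m = ⊥ := by
  rw [eq_bot_iff]
  intro f hf
  rw [Subgroup.mem_bot]
  funext i
  have := map_derivedSeries_le_derivedSeries (Pi.evalMonoidHom (fun _ : ι => B) i) m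
    (Subgroup.mem_map_of_mem _ hf)
  rw [hB, Subgroup.mem_bot] at this
  exact this

lemma derived_one_eq_bot_of_comm {B : Type*} [CommGroup B] : derivedSeries B 1 = ⊥ := by
  rw [derivedSeries_one, commutator_def, Subgroup.commutator_eq_bot_iff_le_centralizer]
  intro g _
  rw [Subgroup.mem_centralizer_iff]
  intro h _
  exact mul_comm h g

lemma derived_semidirect_eq_bot {N G : Type*} [Group N] [Group G] (φ : G →* MulAut N)
    (j m : ℕ) (hG : derivedSeries G j = ⊥) (hN : derivedSeries N m = ⊥) :
    derivedSeries (N ⋊[φ] G) (j + m) = ⊥ := by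
  have h1 : ∀ i, derivedSeries (N ⋊[φ] G) (j + i) ≤
      (derivedSeries N i).map SemidirectProduct.inl := by
    intro i
    induction i with
    | zero =>
      intro x hx
      have hx' : SemidirectProduct.rightHom x ∈ derivedSeries G j :=
        map_derivedSeries_le_derivedSeries _ j (Subgroup.mem_map_of_mem _ hx)
      rw [hG, Subgroup.mem_bot] at hx'
      have : x ∈ (SemidirectProduct.inl : N →* N ⋊[φ] G).range := by
        rw [SemidirectProduct.range_inl_eq_ker_rightHom]
        exact hx'
      obtain ⟨y, rfl⟩ := this
      exact Subgroup.mem_map_of_mem _ (Subgroup.mem_top y)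
    | succ i ih =>
      have : j + (i + 1) = (j + i) + 1 := rfl
      rw [this, derivedSeries_succ]
      calc ⁅derivedSeries (N ⋊[φ] G) (j+i), derivedSeries (N ⋊[φ] G) (j+i)⁆
          ≤ ⁅(derivedSeries N i).map SemidirectProduct.inl,
             (derivedSeries N i).map SemidirectProduct.inl⁆ :=
            Subgroup.commutator_mono ih ih
        _ = (⁅derivedSeries N i, derivedSeries N i⁆).map SemidirectProduct.inl :=
            (Subgroup.map_commutator _ _ _).symm
        _ = (derivedSeries N (i+1)).map SemidirectProduct.inl := rfl
  have h2 := h1 m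
  rw [hN] at h2
  rw [eq_bot_iff]
  intro x hx
  simpa using h2 hx

lemma c_mem_derived (A C : K) (h7 : C ^ 7 = 1) (h5 : A⁻¹ * C * A = C ^ 5) :
    C ∈ derivedSeries K 1 := by
  have h4 : C ^ 4 ∈ derivedSeries K 1 := by
    have hc : C ^ 4 = ⁅C⁻¹, A⁻¹⁆ := by
      rw [commutatorElement_def]
      rw [inv_inv, inv_inv]
      have : C⁻¹ * A⁻¹ * C * A = C⁻¹ * (A⁻¹ * C * A) := by group
      rw [this, h5]
      group
    rw [hc, derivedSeries_one, _root_.commutator_def]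
    exact Subgroup.commutator_mem_commutator (Subgroup.mem_top _) (Subgroup.mem_top _)
  have hC : C = (C ^ 4) ^ 2 * (C ^ 7)⁻¹ := by group
  rw [hC, h7, inv_one, mul_one]
  exact pow_mem h4 2

lemma u_mem (A C β : K) (hC : C ∈ derivedSeries K 1) :
    (β * (A⁻¹ * β * A)⁻¹) * (C⁻¹ * (β * (A⁻¹ * β * A)⁻¹) * C)⁻¹ ∈ derivedSeries K 2 := by
  set w := β * (A⁻¹ * β * A)⁻¹ with hw_def
  have hw : w ∈ derivedSeries K 1 := by
    have : w = ⁅β, A⁻¹⁆ := by rw [commutatorElement_def, inv_inv, hw_def]; group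
    rw [this, derivedSeries_one, _root_.commutator_def]
    exact Subgroup.commutator_mem_commutator (Subgroup.mem_top _) (Subgroup.mem_top _)
  have : w * (C⁻¹ * w * C)⁻¹ = ⁅w, C⁻¹⁆ := by rw [commutatorElement_def, inv_inv]; group
  rw [this]
  exact Subgroup.commutator_mem_commutator hw (inv_mem hC)

lemma x_mem (A C x : K) (hC : C ∈ derivedSeries K 1)
    (heq : x * (A⁻¹ * x * A)⁻¹ * ((A ^ 2)⁻¹ * x * A ^ 2) = C) :
    x ∈ derivedSeries K 1 := by
  have hcomm : ⁅x, A⁻¹⁆ ∈ derivedSeries K 1 := by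
    rw [derivedSeries_one, _root_.commutator_def]
    exact Subgroup.commutator_mem_commutator (Subgroup.mem_top _) (Subgroup.mem_top _)
  have h2 : (A ^ 2)⁻¹ * x * A ^ 2 = ⁅x, A⁻¹⁆⁻¹ * C := by
    rw [← heq, commutatorElement_def, inv_inv]
    group
  have h3 : (A ^ 2)⁻¹ * x * A ^ 2 ∈ derivedSeries K 1 := by
    rw [h2]; exact mul_mem (inv_mem hcomm) hC
  have h4 := (derivedSeries_normal K 1).conj_mem _ h3 (A ^ 2)
  have : A ^ 2 * ((A ^ 2)⁻¹ * x * A ^ 2) * (A ^ 2)⁻¹ = x := by group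
  rwa [this] at h4



variable {K : Type*} [Group K]

lemma commgroup_helper {S : Type*} [CommGroup S] (a b c d e f : S) :
    (a * b⁻¹ * c) * (b * c⁻¹ * d) * (d * e⁻¹ * f)⁻¹ * (e * f⁻¹ * a)⁻¹ = 1 := by
  apply Additive.ofMul.injective
  simp only [ofMul_mul, ofMul_inv, ofMul_one]
  abel

lemma g_mem_derived2 (A C x : K) (hA : A ^ 6 = 1) (hC : C ∈ derivedSeries K 1)
    (hx : x ∈ derivedSeries K 1)
    (heq : x * (A⁻¹ * x * A)⁻¹ * ((A ^ 2)⁻¹ * x * A ^ 2) = C) :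
    C * (A⁻¹ * C * A) * ((A ^ 3)⁻¹ * C * A ^ 3)⁻¹ * ((A ^ 4)⁻¹ * C * A ^ 4)⁻¹
      ∈ derivedSeries K 2 := by
  haveI : (derivedSeries K 2).Normal := derivedSeries_normal K 2
  set q : K →* K ⧸ derivedSeries K 2 := QuotientGroup.mk' _ with hq
  have hker : ∀ y : K, q y = 1 ↔ y ∈ derivedSeries K 2 := fun y =>
    QuotientGroup.eq_one_iff y
  -- the image of the first derived subgroup is commutative
  set S : Subgroup (K ⧸ derivedSeries K 2) := (derivedSeries K 1).map q with hS
  have hcommS : ∀ a b : S, a * b = b * a := by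
    rintro ⟨a, p, hp, rfl⟩ ⟨b, r, hr, rfl⟩
    have h2 : ⁅p, r⁆ ∈ derivedSeries K 2 := Subgroup.commutator_mem_commutator hp hr
    have h1 : ⁅q p, q r⁆ = 1 := by rw [← map_commutatorElement]; exact (hker _).2 h2
    have := commutatorElement_eq_one_iff_commute.mp h1
    exact Subtype.ext this.eq
  letI : CommGroup S := { (inferInstance : Group S) with mul_comm := hcommS }
  -- conjugates
  set y : ℕ → K := fun i => (A ^ i)⁻¹ * x * A ^ i with hy_def
  set z : ℕ → K := fun i => (A ^ i)⁻¹ * C * A ^ i with hz_def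
  have hy : ∀ i, y i ∈ derivedSeries K 1 := by
    intro i
    have := (derivedSeries_normal K 1).conj_mem x hx ((A ^ i)⁻¹)
    simpa [hy_def] using this
  have hz : ∀ i, z i ∈ derivedSeries K 1 := by
    intro i
    have := (derivedSeries_normal K 1).conj_mem C hC ((A ^ i)⁻¹)
    simpa [hz_def] using this
  have e : ∀ i, y i * (y (i+1))⁻¹ * (y (i+2)) = z i := by
    intro i
    simp only [hy_def, hz_def]
    rw [← heq]
    have h1 : A ^ (i + 1) = A ^ i * A := pow_succ A i
    have h2 : A ^ (i + 2) = A ^ i * A ^ 2 := by rw [pow_add]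
    rw [h1, h2]
    group
  have hy6 : y 6 = y 0 := by simp [hy_def, hA]
  -- lift to S
  set ys : ℕ → S := fun i => ⟨q (y i), Subgroup.mem_map_of_mem q (hy i)⟩ with hys
  set zs : ℕ → S := fun i => ⟨q (z i), Subgroup.mem_map_of_mem q (hz i)⟩ with hzs
  have es : ∀ i, ys i * (ys (i+1))⁻¹ * ys (i+2) = zs i := by
    intro i
    apply Subtype.ext
    show q (y i) * (q (y (i+1)))⁻¹ * q (y (i+2)) = q (z i)
    rw [← map_inv, ← map_mul, ← map_mul, e i]
  have hys6 : ys 6 = ys 0 := Subtype.ext (by show q (y 6) = q (y 0); rw [hy6])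
  have key : zs 0 * zs 1 * (zs 3)⁻¹ * (zs 4)⁻¹ = 1 := by
    rw [← es 0, ← es 1, ← es 3, ← es 4, hys6]
    exact commgroup_helper (ys 0) (ys 1) (ys 2) (ys 3) (ys 4) (ys 5)
  have keyQ : q (z 0 * z 1 * (z 3)⁻¹ * (z 4)⁻¹) = 1 := by
    have : q (z 0 * z 1 * (z 3)⁻¹ * (z 4)⁻¹)
        = ((zs 0 * zs 1 * (zs 3)⁻¹ * (zs 4)⁻¹ : S) : K ⧸ derivedSeries K 2) := by
      simp [hzs, map_mul, map_inv]
      rfl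
    rw [this, key, OneMemClass.coe_one]
  have hmem : z 0 * z 1 * (z 3)⁻¹ * (z 4)⁻¹ ∈ derivedSeries K 2 := (hker _).1 keyQ
  have hz0 : z 0 = C := by simp [hz_def]
  have hz1 : z 1 = A⁻¹ * C * A := by simp [hz_def]
  rw [hz0, hz1] at hmem
  exact hmem



/-- Translation action of `G` on `G → B`. -/
def transAut (G B : Type) [Group G] [Group B] : G →* MulAut (G → B) where
  toFun g :=
    { toFun := fun f x => f (g⁻¹ * x)
      invFun := fun f x => f (g * x)
      left_inv := fun f => funext fun x => by
        show f (g⁻¹ * (g * x)) = f x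
        rw [← mul_assoc, inv_mul_cancel, one_mul]
      right_inv := fun f => funext fun x => by
        show f (g * (g⁻¹ * x)) = f x
        rw [← mul_assoc, mul_inv_cancel, one_mul]
      map_mul' := fun f₁ f₂ => rfl }
  map_one' := by ext f x; simp
  map_mul' g h := by ext f x; simp [mul_assoc]

lemma transAut_apply {G B : Type} [Group G] [Group B] (g : G) (f : G → B) (x : G) :
    transAut G B g f x = f (g⁻¹ * x) := rfl

lemma transAut_single {G B : Type} [Group G] [Group B] [DecidableEq G] (g i : G) (b : B) :
    transAut G B g (Pi.mulSingle i b) = Pi.mulSingle (g * i) b := by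
  funext x
  rw [transAut_apply]
  by_cases h : x = g * i
  · rw [h, Pi.mulSingle_eq_same]
    have : g⁻¹ * (g * i) = i := by group
    rw [this, Pi.mulSingle_eq_same]
  · rw [Pi.mulSingle_eq_of_ne h]
    have h2 : g⁻¹ * x ≠ i := fun hc => h (by rw [← hc]; group)
    rw [Pi.mulSingle_eq_of_ne h2]

/-- Wreath product. -/
abbrev Wr (B G : Type) [Group B] [Group G] : Type := (G → B) ⋊[transAut G B] G

lemma inl_commutator {N G : Type} [Group N] [Group G] (φ : G →* MulAut N) (s : N) (g : G) :
    ⁅(SemidirectProduct.inl s : N ⋊[φ] G), (SemidirectProduct.inr g : N ⋊[φ] G)⁆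
      = SemidirectProduct.inl (s * (φ g s)⁻¹) := by
  have h : (SemidirectProduct.inl ((φ g s)⁻¹) : N ⋊[φ] G)
      = SemidirectProduct.inr g * SemidirectProduct.inl s⁻¹ * SemidirectProduct.inr g⁻¹ := by
    rw [← map_inv (φ g), SemidirectProduct.inl_aut]
  rw [commutatorElement_def, map_mul, h]
  simp only [map_inv]
  group

/-- the C2-indexed iterated wreath family -/
def W : ℕ → GrpCat
  | 0 => GrpCat.of PUnit
  | k+1 => GrpCat.of (Wr (W k) (Multiplicative (ZMod 2)))

lemma W_top : ∀ k, derivedSeries (W k) k = ⊥ := by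
  intro k
  induction k with
  | zero =>
    haveI : Subsingleton (W 0) := inferInstanceAs (Subsingleton PUnit)
    rw [eq_bot_iff]
    intro x _
    rw [Subgroup.mem_bot]
    exact Subsingleton.elim x 1
  | succ k ih =>
    show derivedSeries (Wr (W k) (Multiplicative (ZMod 2))) (k+1) = ⊥
    have h : (1 : ℕ) + k = k + 1 := Nat.add_comm 1 k
    rw [← h]
    exact derived_semidirect_eq_bot _ 1 k derived_one_eq_bot_of_comm (derived_pi_eq_bot k ih)

lemma W_ne_bot : ∀ k, derivedSeries (W (k+1)) k ≠ ⊥ := by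
  intro k
  induction k with
  | zero =>
    intro h
    have hx : (SemidirectProduct.inr (Multiplicative.ofAdd (1 : ZMod 2)) :
        Wr (W 0) (Multiplicative (ZMod 2))) ∈ (⊥ : Subgroup (W 1)) := by
      rw [← h]; exact Subgroup.mem_top _
    replace hx := Subgroup.mem_bot.mp hx
    have := SemidirectProduct.inr_injective (hx.trans (map_one SemidirectProduct.inr).symm)
    exact absurd this (by decide)
  | succ k ih =>
    suffices hsuf : derivedSeries (Wr (W (k+1)) (Multiplicative (ZMod 2))) (1+k) ≠ ⊥ by
      have harith : (1 : ℕ) + k = k + 1 := Nat.add_comm 1 k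
      rw [harith] at hsuf
      exact hsuf
    set τ : Multiplicative (ZMod 2) := Multiplicative.ofAdd 1 with hτ
    set F : (W (k+1)) → (Multiplicative (ZMod 2) → (W (k+1))) := fun b =>
      Pi.mulSingle (1 : Multiplicative (ZMod 2)) b *
        (Pi.mulSingle τ b : Multiplicative (ZMod 2) → (W (k+1)))⁻¹ with hF
    set Γ : Subgroup (Multiplicative (ZMod 2) → (W (k+1))) := Subgroup.closure (Set.range F)
      with hΓ
    have hinlF : ∀ b, (SemidirectProduct.inl (F b) :
        Wr (W (k+1)) (Multiplicative (ZMod 2))) ∈ derivedSeries (Wr (W (k+1)) (Multiplicative (ZMod 2))) 1 := by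
      intro b
      have h1 : F b = Pi.mulSingle (1 : Multiplicative (ZMod 2)) b *
          (transAut (Multiplicative (ZMod 2)) (W (k+1)) τ
            (Pi.mulSingle (1 : Multiplicative (ZMod 2)) b))⁻¹ := by
        rw [transAut_single, mul_one]
      have h2 : (SemidirectProduct.inl (F b) : Wr (W (k+1)) (Multiplicative (ZMod 2)))
          = ⁅(SemidirectProduct.inl (Pi.mulSingle (1 : Multiplicative (ZMod 2)) b) :
              Wr (W (k+1)) (Multiplicative (ZMod 2))),
             (SemidirectProduct.inr τ : Wr (W (k+1)) (Multiplicative (ZMod 2)))⁆ := by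
        rw [inl_commutator, ← h1]
      rw [h2, derivedSeries_one, _root_.commutator_def]
      exact Subgroup.commutator_mem_commutator (Subgroup.mem_top _) (Subgroup.mem_top _)
    have hΓle : Γ ≤ (derivedSeries (Wr (W (k+1)) (Multiplicative (ZMod 2))) 1).comap
        (SemidirectProduct.inl (φ := transAut (Multiplicative (ZMod 2)) (W (k+1)))) := by
      rw [hΓ, Subgroup.closure_le]
      rintro _ ⟨b, rfl⟩
      exact hinlF b
    apply derived_ne_bot_of
      ((SemidirectProduct.inl (φ := transAut (Multiplicative (ZMod 2)) (W (k+1)))).comp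
        Γ.subtype)
      (SemidirectProduct.inl_injective.comp Subtype.val_injective) 1
      (fun γ => Subgroup.mem_comap.mp (hΓle γ.2))
      ((Pi.evalMonoidHom (fun _ : Multiplicative (ZMod 2) => (W (k+1) : Type)) 1).comp
        Γ.subtype)
      ?_ k ih
    intro b
    refine ⟨⟨F b, Subgroup.subset_closure ⟨b, rfl⟩⟩, ?_⟩
    show F b 1 = b
    rw [hF]
    simp only [Pi.mul_apply, Pi.inv_apply, Pi.mulSingle_eq_same]
    rw [Pi.mulSingle_eq_of_ne (by decide : (1 : Multiplicative (ZMod 2)) ≠ τ), inv_one,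
      mul_one]



abbrev Zm7 := Multiplicative (ZMod 7)

def mulAutOfUnit (u : (ZMod 7)ˣ) : MulAut Zm7 where
  toFun t := Multiplicative.ofAdd ((u : ZMod 7) * t.toAdd)
  invFun t := Multiplicative.ofAdd (((u⁻¹ : (ZMod 7)ˣ) : ZMod 7) * t.toAdd)
  left_inv t := by
    show Multiplicative.ofAdd (((u⁻¹ : (ZMod 7)ˣ) : ZMod 7) * ((u : ZMod 7) * t.toAdd)) = t
    rw [← mul_assoc, ← Units.val_mul, inv_mul_cancel, Units.val_one, one_mul]
    rfl
  right_inv t := by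
    show Multiplicative.ofAdd ((u : ZMod 7) * (((u⁻¹ : (ZMod 7)ˣ) : ZMod 7) * t.toAdd)) = t
    rw [← mul_assoc, ← Units.val_mul, mul_inv_cancel, Units.val_one, one_mul]
    rfl
  map_mul' s t := by
    show Multiplicative.ofAdd ((u : ZMod 7) * (s * t).toAdd)
      = Multiplicative.ofAdd ((u : ZMod 7) * s.toAdd) * Multiplicative.ofAdd ((u : ZMod 7) * t.toAdd)
    rw [toAdd_mul, mul_add, ofAdd_add]

def φG : (ZMod 7)ˣ →* MulAut Zm7 where
  toFun := mulAutOfUnit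
  map_one' := by
    ext t
    show Multiplicative.ofAdd (((1 : (ZMod 7)ˣ) : ZMod 7) * t.toAdd) = t
    rw [Units.val_one, one_mul]
    rfl
  map_mul' u v := by
    ext t
    show Multiplicative.ofAdd ((((u * v) : (ZMod 7)ˣ) : ZMod 7) * t.toAdd)
      = Multiplicative.ofAdd ((u : ZMod 7) * ((v : ZMod 7) * t.toAdd))
    rw [Units.val_mul, mul_assoc]

abbrev GG : Type := Zm7 ⋊[φG] (ZMod 7)ˣ

def u5 : (ZMod 7)ˣ := ⟨3, 5, by decide, by decide⟩

def aG : GG := SemidirectProduct.inr u5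
def cG : GG := SemidirectProduct.inl (Multiplicative.ofAdd 1)

def γG : GG := cG * (aG⁻¹ * cG * aG) * ((aG ^ 3)⁻¹ * cG * aG ^ 3)⁻¹
    * ((aG ^ 4)⁻¹ * cG * aG ^ 4)⁻¹

lemma haG6 : aG ^ 6 = 1 := by decide
lemma hcG7 : cG ^ 7 = 1 := by decide
lemma hconj : aG⁻¹ * cG * aG = cG ^ 5 := by decide
lemma hcG_ne : cG ≠ 1 := by decide
lemma hγG_ne : γG ≠ 1 := by decide
lemma fact1 : (1 : GG) ≠ aG⁻¹ := by decide
lemma fact2 : cG ≠ aG⁻¹ := by decide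
lemma fact3 : γG ≠ aG⁻¹ := by decide
lemma fact4 : cG * γG ≠ 1 := by decide
lemma fact5 : cG * γG ≠ aG⁻¹ := by decide




section BSection

variable {B : Type} [Group B]

open SemidirectProduct

abbrev HH (B : Type) [Group B] : Type := Wr B GG

def βe (b : B) : GG → B := Pi.mulSingle 1 b
def wfun (b : B) : GG → B := βe b * (transAut GG B aG⁻¹ (βe b))⁻¹
def Ufun (b : B) : GG → B := wfun b * (transAut GG B cG⁻¹ (wfun b))⁻¹
def hfun (b : B) : GG → B := transAut GG B γG⁻¹ (Ufun b) * (Ufun b)⁻¹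

lemma inl_conj (g : GG) (s : GG → B) :
    ((inr g : HH B))⁻¹ * inl s * inr g = inl (transAut GG B g⁻¹ s) := by
  rw [map_inv (transAut GG B), inl_aut_inv, map_inv]

lemma inl_wfun (b : B) : (inl (wfun b) : HH B)
    = inl (βe b) * ((inr aG)⁻¹ * inl (βe b) * inr aG)⁻¹ := by
  rw [wfun, map_mul, map_inv, inl_conj]

lemma inl_Ufun (b : B) : (inl (Ufun b) : HH B)
    = inl (wfun b) * ((inr cG)⁻¹ * inl (wfun b) * inr cG)⁻¹ := by
  rw [Ufun, map_mul, map_inv, inl_conj]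

lemma inl_hfun (b : B) : (inl (hfun b) : HH B) = ⁅((inr γG : HH B))⁻¹, inl (Ufun b)⁆ := by
  have h1 : (inl ((Ufun b)⁻¹) : HH B) = (inl (Ufun b))⁻¹ := map_inv _ _
  rw [hfun, map_mul, h1, commutatorElement_def, inv_inv, ← inl_conj]

lemma wfun_apply_one (b : B) : wfun b 1 = b := by
  rw [wfun, βe, transAut_single, mul_one]
  rw [Pi.mul_apply, Pi.inv_apply, Pi.mulSingle_eq_same, Pi.mulSingle_eq_of_ne fact1, inv_one,
    mul_one]

lemma wfun_apply_cG (b : B) : wfun b cG = 1 := by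
  rw [wfun, βe, transAut_single, mul_one]
  rw [Pi.mul_apply, Pi.inv_apply, Pi.mulSingle_eq_of_ne hcG_ne,
    Pi.mulSingle_eq_of_ne fact2, inv_one, mul_one]

lemma wfun_apply_γG (b : B) : wfun b γG = 1 := by
  rw [wfun, βe, transAut_single, mul_one]
  rw [Pi.mul_apply, Pi.inv_apply, Pi.mulSingle_eq_of_ne hγG_ne,
    Pi.mulSingle_eq_of_ne fact3, inv_one, mul_one]

lemma wfun_apply_cγ (b : B) : wfun b (cG * γG) = 1 := by
  rw [wfun, βe, transAut_single, mul_one]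
  rw [Pi.mul_apply, Pi.inv_apply, Pi.mulSingle_eq_of_ne fact4,
    Pi.mulSingle_eq_of_ne fact5, inv_one, mul_one]

lemma Ufun_apply_one (b : B) : Ufun b 1 = b := by
  rw [Ufun, Pi.mul_apply, Pi.inv_apply, transAut_apply, inv_inv, mul_one, wfun_apply_one,
    wfun_apply_cG, inv_one, mul_one]

lemma Ufun_apply_γG (b : B) : Ufun b γG = 1 := by
  rw [Ufun, Pi.mul_apply, Pi.inv_apply, transAut_apply, inv_inv, wfun_apply_γG,
    wfun_apply_cγ, inv_one, mul_one]

lemma hfun_apply_one (b : B) : hfun b 1 = b⁻¹ := by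
  rw [hfun, Pi.mul_apply, Pi.inv_apply, transAut_apply, inv_inv, mul_one, Ufun_apply_γG,
    Ufun_apply_one, one_mul]

/-- The key "reach" lemma specialised to base functions over `GG`. -/
lemma reach {K : Type*} [Group K] (k m : ℕ) (hB : derivedSeries B m ≠ ⊥)
    (F : B → (GG → B)) (ψ : (GG → B) →* K) (hψ : Function.Injective ψ)
    (hgen : ∀ b, ψ (F b) ∈ derivedSeries K k)
    (hev : ∀ b : B, ∃ b', F b' 1 = b) :
    derivedSeries K (k + m) ≠ ⊥ := by
  set Γ : Subgroup (GG → B) := Subgroup.closure (Set.range F) with hΓ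
  have hΓle : Γ ≤ (derivedSeries K k).comap ψ := by
    rw [hΓ, Subgroup.closure_le]
    rintro _ ⟨b, rfl⟩
    exact hgen b
  apply derived_ne_bot_of (ψ.comp Γ.subtype) (hψ.comp Subtype.val_injective) k
    (fun γ => Subgroup.mem_comap.mp (hΓle γ.2))
    ((Pi.evalMonoidHom (fun _ : GG => B) 1).comp Γ.subtype) ?_ m hB
  intro b
  obtain ⟨b', hb'⟩ := hev b
  exact ⟨⟨F b', Subgroup.subset_closure ⟨b', rfl⟩⟩, hb'⟩

end BSection


end Stmt18

set_option maxRecDepth 8000 in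
open Stmt18 SemidirectProduct in
theorem stmt_18 (n : ℕ) (hn : 2 ≤ n) :
    ∃ (H : GrpCat) (a c : H),
      derivedSeries H n = ⊥ ∧ derivedSeries H (n - 1) ≠ ⊥ ∧
      ∀ (K : GrpCat) (f : H →* K), Function.Injective f →
        ∀ x : K, x * ((f a)⁻¹ * x * f a)⁻¹ * ((f a ^ 2)⁻¹ * x * f a ^ 2) = f c →
          derivedSeries K n ≠ ⊥ := by
  classical
  set B : GrpCat := W (n - 2) with hB_def
  have hconjH : (inr aG : HH B)⁻¹ * inr cG * inr aG = (inr cG) ^ 5 := by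
    rw [← map_inv, ← map_mul, ← map_mul, hconj, map_pow]
  have hc7H : (inr cG : HH B) ^ 7 = 1 := by rw [← map_pow, hcG7, map_one]
  have hcH : (inr cG : HH B) ∈ derivedSeries (HH B) 1 := c_mem_derived _ _ hc7H hconjH
  have hBne : 3 ≤ n → derivedSeries (B : Type) (n - 3) ≠ ⊥ := by
    intro h3
    have h := W_ne_bot (n - 3)
    have e : n - 3 + 1 = n - 2 := by omega
    rw [e] at h
    exact h
  -- the H-side derived series facts
  have hHtop : derivedSeries (HH B) n = ⊥ := by
    have hG2 : derivedSeries GG 2 = ⊥ :=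
      derived_semidirect_eq_bot φG 1 1 derived_one_eq_bot_of_comm derived_one_eq_bot_of_comm
    have hBn : derivedSeries (B : Type) (n - 2) = ⊥ := W_top (n - 2)
    have h := derived_semidirect_eq_bot (transAut GG B) 2 (n - 2) hG2
      (derived_pi_eq_bot _ hBn)
    have e : 2 + (n - 2) = n := by omega
    rwa [e] at h
  have hHne : derivedSeries (HH B) (n - 1) ≠ ⊥ := by
    rcases eq_or_lt_of_le hn with h2 | h3
    · have e : n - 1 = 1 := by omega
      rw [e]
      intro hbot
      rw [hbot, Subgroup.mem_bot] at hcH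
      exact hcG_ne (inr_injective (by rw [hcH, map_one]))
    · have hgen : ∀ b : (B : Type), (inl (Ufun b) : HH B) ∈ derivedSeries (HH B) 2 := by
        intro b
        rw [inl_Ufun, inl_wfun]
        exact u_mem _ _ _ hcH
      have h := reach 2 (n - 3) (hBne h3) Ufun inl inl_injective hgen
        (fun b => ⟨b, Ufun_apply_one b⟩)
      have e : 2 + (n - 3) = n - 1 := by omega
      rwa [e] at h
  -- lift everything through ULift to get the right universe
  refine ⟨GrpCat.of (ULift (HH B)), ⟨inr aG⟩, ⟨inr cG⟩, ?_, ?_, ?_⟩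
  · show derivedSeries (ULift (HH B)) n = ⊥
    have hsur : Function.Surjective ⇑(MulEquiv.ulift (α := HH B)).symm.toMonoidHom :=
      (MulEquiv.ulift (α := HH B)).symm.surjective
    rw [← map_derivedSeries_eq hsur n, hHtop, Subgroup.map_bot]
  · show derivedSeries (ULift (HH B)) (n - 1) ≠ ⊥
    intro hbot
    apply hHne
    have hsur : Function.Surjective ⇑(MulEquiv.ulift (α := HH B)).toMonoidHom :=
      (MulEquiv.ulift (α := HH B)).surjective
    rw [← map_derivedSeries_eq hsur (n - 1), hbot, Subgroup.map_bot]
  · intro K f hf x heq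
    set f' : HH B →* K :=
      f.comp ((MulEquiv.ulift (α := HH B)).symm : HH B →* ULift (HH B)) with hf'_def
    have hf'inj : Function.Injective f' :=
      hf.comp (MulEquiv.ulift (α := HH B)).symm.injective
    have heq' : x * ((f' (inr aG))⁻¹ * x * f' (inr aG))⁻¹
        * ((f' (inr aG) ^ 2)⁻¹ * x * f' (inr aG) ^ 2) = f' (inr cG) := heq
    clear heq
    set A := f' (inr aG) with hA_def
    set C := f' (inr cG) with hC_def
    have hA6 : A ^ 6 = 1 := by
      rw [hA_def, ← map_pow, ← map_pow, haG6, map_one, map_one]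
    have hC7 : C ^ 7 = 1 := by
      rw [hC_def, ← map_pow, ← map_pow, hcG7, map_one, map_one]
    have hCA : A⁻¹ * C * A = C ^ 5 := by
      rw [hA_def, hC_def, ← map_inv, ← map_mul, ← map_mul, hconjH, map_pow]
    have hCK : C ∈ derivedSeries (K : Type _) 1 := c_mem_derived A C hC7 hCA
    have hxK : x ∈ derivedSeries (K : Type _) 1 := x_mem A C x hCK heq'
    have hgK : C * (A⁻¹ * C * A) * ((A ^ 3)⁻¹ * C * A ^ 3)⁻¹ * ((A ^ 4)⁻¹ * C * A ^ 4)⁻¹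
        ∈ derivedSeries (K : Type _) 2 := g_mem_derived2 A C x hA6 hCK hxK heq'
    have hγf : f' (inr γG) = C * (A⁻¹ * C * A) * ((A ^ 3)⁻¹ * C * A ^ 3)⁻¹
        * ((A ^ 4)⁻¹ * C * A ^ 4)⁻¹ := by
      rw [γG]
      simp only [map_mul, map_inv, map_pow, hA_def, hC_def]
    rw [← hγf] at hgK
    rcases eq_or_lt_of_le hn with h2 | h3
    · have e : n = 2 := h2.symm
      subst e
      intro hbot
      rw [hbot, Subgroup.mem_bot] at hgK
      have h1 : f' (inr γG) = f' 1 := by rw [hgK, map_one]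
      exact hγG_ne (inr_injective (by rw [hf'inj h1]; rfl))
    · have huK : ∀ b : (B : Type), f' (inl (Ufun b)) ∈ derivedSeries (K : Type _) 2 := by
        intro b
        have h1 : f' (inl (Ufun b)) =
            (f' (inl (βe b)) * (A⁻¹ * f' (inl (βe b)) * A)⁻¹)
              * (C⁻¹ * (f' (inl (βe b)) * (A⁻¹ * f' (inl (βe b)) * A)⁻¹) * C)⁻¹ := by
          rw [inl_Ufun, inl_wfun]
          simp only [map_mul, map_inv, hA_def, hC_def]
        rw [h1]
        exact u_mem _ _ _ hCK
      have hgen : ∀ b : (B : Type), (f'.comp inl) (hfun b) ∈ derivedSeries (K : Type _) 3 := by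
        intro b
        have h1 : (f'.comp inl) (hfun b) = ⁅(f' (inr γG))⁻¹, f' (inl (Ufun b))⁆ := by
          show f' (inl (hfun b)) = _
          rw [inl_hfun, map_commutatorElement, map_inv]
        rw [h1]
        exact Subgroup.commutator_mem_commutator (inv_mem hgK) (huK b)
      have h := reach 3 (n - 3) (hBne h3) hfun (f'.comp inl) (hf'inj.comp inl_injective) hgen
        (fun b => ⟨b⁻¹, by rw [hfun_apply_one, inv_inv]⟩)
      have e : 3 + (n - 3) = n := by omega
      rwa [e] at h
end
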